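/- Let n ≥ 1, β a partition of n − 1 realized as σ_β = ∏_j σ_j (disjoint cycles of lengths β_j on consecutive blocks of {1,…,n−1}), α a composition of n, i a positive index, j a positive index with β_j > 0 or j-th cycle empty, and X ⊆ {1,…,n−1}. Let σ[j] ∈ S_n be obtained from σ_β by inserting n into the j-th cycle. Then the number of α-tabloids t fixed by σ[j] with t_i = X ∪ {n} equals the number of (α − ε_i)-tabloids t fixed by σ_β with t_i = X if supp(σ_j) ⊆ X, and equals 0 otherwise. -/

import Mathlib

open Finsupp
open scoped Classical

/-- The row index of `k` in the standard tabloid of shape `α`: the least `i` such that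
`k < α 0 + ⋯ + α i`. -/
noncomputable def rowIdx (α : ℕ →₀ ℤ) (k : ℕ) : ℕ := sInf {i | (k : ℤ) < ∑ j ∈ Finset.range (i + 1), α j}

/-- The Young subgroup of `S_n` associated to `α`: the stabilizer of the standard tabloid
whose rows are the consecutive blocks of `{0, …, n-1}` of sizes `α 0, α 1, …`. -/
def youngSubgroup (n : ℕ) (α : ℕ →₀ ℤ) : Subgroup (Equiv.Perm (Fin n)) where
  carrier := {σ | ∀ k : Fin n, rowIdx α (σ k) = rowIdx α k}
  one_mem' := fun _ => rfl
  mul_mem' := by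
    intro a b ha hb k
    simpa [Equiv.Perm.mul_apply] using (ha (b k)).trans (hb k)
  inv_mem' := by
    intro a ha k
    have := ha (a⁻¹ k)
    rw [show a (a⁻¹ k) = k from by simp] at this
    exact this.symm

/-- The value at `g` of the permutation character of `G` acting on the cosets of `H`:
the number of fixed cosets.  This is the value of the character induced from the
trivial character of `H`. -/
noncomputable def permCharValue {n : ℕ} (H : Subgroup (Equiv.Perm (Fin n)))
    (g : Equiv.Perm (Fin n)) : ℤ :=
  Nat.card {x : Equiv.Perm (Fin n) ⧸ H // g • x = x}

/-- `ξ^α`, as a function on `S_n`: the permutation character induced from the trivial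
character of the Young subgroup `S_α` when `α` is nonnegative with `|α| = n`, and `0`
otherwise. -/
noncomputable def xi (n : ℕ) (α : ℕ →₀ ℤ) (g : Equiv.Perm (Fin n)) : ℤ :=
  if (∀ i, 0 ≤ α i) ∧ (α.sum fun _ v => v) = (n : ℤ) then permCharValue (youngSubgroup n α) g
  else 0

/-- An `α`-tabloid: a sequence of pairwise disjoint subsets of `{0,…,n-1}` with
`|t i| = α i` for every `i`. -/
def IsTabloid (n : ℕ) (α : ℕ →₀ ℤ) (t : ℕ → Finset (Fin n)) : Prop :=
  (∀ i j, i ≠ j → Disjoint (t i) (t j)) ∧ ∀ i, ((t i).card : ℤ) = α i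

/-- The multiset of (nonzero) parts of a finitely supported sequence. -/
def partsOf (β : ℕ →₀ ℕ) : Multiset ℕ := β.support.val.map β

/-- `σ` has cycle type `β` (with `1`s in `β` recording fixed points). -/
def HasCycleType {n : ℕ} (σ : Equiv.Perm (Fin n)) (β : ℕ →₀ ℕ) : Prop :=
  (β.sum fun _ v => v) = n ∧ σ.cycleType = Multiset.filter (fun k => 2 ≤ k) (partsOf β)

/-- A nonnegative sequence regarded as an integer sequence. -/
noncomputable def natToZ (β : ℕ →₀ ℕ) : ℕ →₀ ℤ := Finsupp.mapRange Int.ofNat rfl β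

/-- The virtual character `χ^α = ∑_{σ ∈ S_l} sgn σ · ξ^{α + σ - id_l}` (0-indexed,
the sequence `α + σ - id_l` has `i`-th entry `α i + σ i - i`). -/
noncomputable def chi (n l : ℕ) (α : ℕ →₀ ℤ) (g : Equiv.Perm (Fin n)) : ℤ :=
  ∑ σ : Equiv.Perm (Fin l),
    (Equiv.Perm.sign σ : ℤ) *
      xi n (α + ∑ i : Fin l, Finsupp.single (i : ℕ) (((σ i : ℕ) : ℤ) - (i : ℕ))) g

/-- `ζ^α`, the irreducible character of `S_n` corresponding to the partition `α` of `n`,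
given by the determinantal formula `ζ^α = χ^α` (with `l = n ≥ l(α)`). -/
noncomputable def zeta (n : ℕ) (α : ℕ →₀ ℕ) (g : Equiv.Perm (Fin n)) : ℤ :=
  chi n n (natToZ α) g

/-- `α` is a partition of `n`: weakly decreasing with `|α| = n`. -/
def IsPartitionOf (α : ℕ →₀ ℕ) (n : ℕ) : Prop :=
  (∀ i, α (i + 1) ≤ α i) ∧ (α.sum fun _ v => v) = n


lemma image_perm_eq_iff' {n : ℕ} (π : Equiv.Perm (Fin n)) (s : Finset (Fin n)) :
    s.image π = s ↔ ∀ x ∈ s, π x ∈ s := by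
  constructor
  · intro h x hx
    rw [← h]
    exact Finset.mem_image_of_mem _ hx
  · intro h
    apply Finset.eq_of_subset_of_card_le
    · intro z hz
      obtain ⟨x, hx, rfl⟩ := Finset.mem_image.mp hz
      exact h x hx
    · exact (Finset.card_image_of_injective s π.injective).ge

lemma inv_mem_of_image_perm_eq {n : ℕ} {π : Equiv.Perm (Fin n)} {s : Finset (Fin n)}
    (h : s.image π = s) {x : Fin n} (hx : x ∈ s) : π⁻¹ x ∈ s := by
  rw [← h] at hx
  obtain ⟨z, hz, hzx⟩ := Finset.mem_image.mp hx
  rw [← hzx, (Equiv.Perm.inv_eq_iff_eq.mpr rfl : π⁻¹ (π z) = z)]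
  exact hz

/-- Step 2: the number of `α`-tabloids fixed by `σ[j]` (obtained from `σ` by inserting the
extra point `n` into the `j`-th cycle) whose `i`-th row is `X ∪ {n}` equals the number of
`(α-ε_i)`-tabloids fixed by `σ` whose `i`-th row is `X` when `supp σ_j ⊆ X`, and is `0`
otherwise. -/
theorem stmt12 (N : ℕ) (α : ℕ →₀ ℤ) (hαpos : ∀ i, 0 ≤ α i)
    (hαsum : (α.sum fun _ v => v) = ((N + 1 : ℕ) : ℤ))
    (β : ℕ →₀ ℕ) (hβpart : ∀ j, β (j + 1) ≤ β j) (hβsum : (β.sum fun _ v => v) = N)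
    (f : ℕ → Equiv.Perm (Fin N)) (S : ℕ → Finset (Fin N))
    (hcomm : (β.support : Set ℕ).Pairwise fun a b => Commute (f a) (f b))
    (σ : Equiv.Perm (Fin N)) (hσ : σ = β.support.noncommProd f hcomm)
    (hcard : ∀ j, (S j).card = β j)
    (hcyc : ∀ j, (f j).IsCycleOn (S j : Set (Fin N)))
    (hfix : ∀ j x, x ∉ S j → f j x = x)
    (hdisj : ∀ j k, j ≠ k → Disjoint (S j) (S k))
    (i j : ℕ) (X : Finset (Fin N)) (p : Fin (N + 1))
    (hp : (∃ q ∈ S j, p = Fin.castSucc q) ∨ (S j = ∅ ∧ p = Fin.last N)) :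
    Nat.card {t : ℕ → Finset (Fin (N + 1)) //
        IsTabloid (N + 1) α t ∧
        (∀ k, (t k).image (σ.viaFintypeEmbedding Fin.castSuccEmb * Equiv.swap p (Fin.last N))
          = t k) ∧
        t i = insert (Fin.last N) (X.image Fin.castSucc)} =
      if S j ⊆ X then
        Nat.card {t : ℕ → Finset (Fin N) //
          IsTabloid N (α - Finsupp.single i 1) t ∧ (∀ k, (t k).image σ = t k) ∧ t i = X}
      else 0 := by
  classical
  set E := σ.viaFintypeEmbedding Fin.castSuccEmb * Equiv.swap p (Fin.last N) with hE
  have hlastne : ∀ x : Fin N, Fin.castSucc x ≠ Fin.last N := fun x => (Fin.castSucc_lt_last x).ne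
  have htilde : ∀ x : Fin N,
      σ.viaFintypeEmbedding Fin.castSuccEmb (Fin.castSucc x) = Fin.castSucc (σ x) := by
    intro x
    simpa using Equiv.Perm.viaFintypeEmbedding_apply_image σ Fin.castSuccEmb x
  have htlast : σ.viaFintypeEmbedding Fin.castSuccEmb (Fin.last N) = Fin.last N := by
    apply Equiv.Perm.viaFintypeEmbedding_apply_notMem_range
    rintro ⟨x, hx⟩
    exact hlastne x (by simpa using hx)
  have hA : ∀ x : Fin N, Fin.castSucc x ≠ p → E (Fin.castSucc x) = Fin.castSucc (σ x) := by
    intro x hxp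
    rw [hE, Equiv.Perm.mul_apply, Equiv.swap_apply_of_ne_of_ne hxp (hlastne x), htilde]
  have hB : E p = Fin.last N := by
    rw [hE, Equiv.Perm.mul_apply, Equiv.swap_apply_left, htlast]
  have hClast : E (Fin.last N) = σ.viaFintypeEmbedding Fin.castSuccEmb p := by
    rw [hE, Equiv.Perm.mul_apply, Equiv.swap_apply_right]
  have hcastX : ∀ (Y : Finset (Fin N)) (x : Fin N),
      Fin.castSucc x ∈ insert (Fin.last N) (Y.image Fin.castSucc) ↔ x ∈ Y := by
    intro Y x
    simp only [Finset.mem_insert, Finset.mem_image]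
    constructor
    · rintro (h | ⟨y, hy, hyx⟩)
      · exact absurd h (hlastne x)
      · exact (Fin.castSucc_injective N hyx) ▸ hy
    · intro h; exact Or.inr ⟨x, h, rfl⟩
  by_cases hXj : S j ⊆ X
  · rw [if_pos hXj]
    have hpX : p = Fin.last N ∨ ∃ q, q ∈ X ∧ p = Fin.castSucc q := by
      rcases hp with ⟨q, hq, rfl⟩ | ⟨_, rfl⟩
      · exact Or.inr ⟨q, hXj hq, rfl⟩
      · exact Or.inl rfl
    have hud : ∀ (t : ℕ → Finset (Fin (N + 1))), (∀ k l, k ≠ l → Disjoint (t k) (t l)) →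
        t i = insert (Fin.last N) (X.image Fin.castSucc) → ∀ k, k ≠ i →
        (Finset.univ.filter fun x => Fin.castSucc x ∈ t k).image Fin.castSucc = t k := by
      intro t hdisjt h3 k hk
      have hlastmem : Fin.last N ∈ t i := by rw [h3]; exact Finset.mem_insert_self _ _
      ext z
      simp only [Finset.mem_image, Finset.mem_filter, Finset.mem_univ, true_and]
      constructor
      · rintro ⟨x, hx, rfl⟩; exact hx
      · intro hz
        have hzlast : z ≠ Fin.last N := by
          rintro rfl
          exact (Finset.disjoint_left.mp (hdisjt k i hk) hz) hlastmem
        obtain ⟨x, rfl⟩ := Fin.exists_castSucc_eq.mpr hzlast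
        exact ⟨x, hz, rfl⟩
    have hdown : ∀ t : ℕ → Finset (Fin (N + 1)),
        IsTabloid (N + 1) α t → (∀ k, (t k).image E = t k) →
        t i = insert (Fin.last N) (X.image Fin.castSucc) →
        (IsTabloid N (α - Finsupp.single i 1)
            fun k => Finset.univ.filter fun x => Fin.castSucc x ∈ t k) ∧
          (∀ k, Finset.image σ (Finset.univ.filter fun x => Fin.castSucc x ∈ t k)
              = Finset.univ.filter fun x => Fin.castSucc x ∈ t k) ∧
          (Finset.univ.filter fun x => Fin.castSucc x ∈ t i) = X := by
      intro t h1 h2 h3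
      have hlastmem : Fin.last N ∈ t i := by rw [h3]; exact Finset.mem_insert_self _ _
      have hpti : p ∈ t i := by
        rcases hpX with rfl | ⟨q, hq, rfl⟩
        · exact hlastmem
        · rw [h3]; exact Finset.mem_insert_of_mem (Finset.mem_image_of_mem _ hq)
      have hdi : (Finset.univ.filter fun x => Fin.castSucc x ∈ t i) = X := by
        ext x
        simp only [Finset.mem_filter, Finset.mem_univ, true_and, h3, hcastX]
      refine ⟨⟨?_, ?_⟩, ?_, hdi⟩
      · intro k l hkl
        rw [Finset.disjoint_left]
        intro x hx hx'
        simp only [Finset.mem_filter, Finset.mem_univ, true_and] at hx hx'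
        exact Finset.disjoint_left.mp (h1.1 k l hkl) hx hx'
      · intro k
        beta_reduce
        by_cases hk : k = i
        · subst hk
          rw [hdi]
          have hcardti := h1.2 k
          rw [h3, Finset.card_insert_of_notMem (by
              intro hmem
              obtain ⟨x, _, hx⟩ := Finset.mem_image.mp hmem
              exact hlastne x hx),
            Finset.card_image_of_injective _ (Fin.castSucc_injective N)] at hcardti
          rw [Finsupp.sub_apply, Finsupp.single_eq_same]
          push_cast at hcardti
          linarith
        · have hc := congrArg Finset.card (hud t h1.1 h3 k hk)
          rw [Finset.card_image_of_injective _ (Fin.castSucc_injective N)] at hc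
          rw [hc, Finsupp.sub_apply, Finsupp.single_apply, if_neg (fun h => hk h.symm), h1.2 k]
          ring
      · intro k
        beta_reduce
        rw [image_perm_eq_iff']
        intro x hx
        simp only [Finset.mem_filter, Finset.mem_univ, true_and] at hx ⊢
        have hclk : ∀ z ∈ t k, E z ∈ t k := (image_perm_eq_iff' E (t k)).mp (h2 k)
        by_cases hk : k = i
        · subst hk
          by_cases hxp : Fin.castSucc x = p
          · rcases hpX with rfl | ⟨q, hq, rfl⟩
            · exact absurd hxp (hlastne x)
            · obtain rfl : x = q := Fin.castSucc_injective N hxp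
              have hmem := hclk _ hlastmem
              rw [hClast, htilde] at hmem
              exact hmem
          · have hmem := hclk _ hx
            rwa [hA x hxp] at hmem
        · have hxp : Fin.castSucc x ≠ p := by
            intro h
            exact Finset.disjoint_left.mp (h1.1 k i hk) hx (h ▸ hpti)
          have hmem := hclk _ hx
          rwa [hA x hxp] at hmem
    have hup : ∀ t : ℕ → Finset (Fin N),
        IsTabloid N (α - Finsupp.single i 1) t → (∀ k, (t k).image σ = t k) → t i = X →
        IsTabloid (N + 1) α (fun k => if k = i then insert (Fin.last N) (X.image Fin.castSucc)
            else (t k).image Fin.castSucc) ∧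
          ∀ k, Finset.image E (if k = i then insert (Fin.last N) (X.image Fin.castSucc)
              else (t k).image Fin.castSucc)
            = if k = i then insert (Fin.last N) (X.image Fin.castSucc)
              else (t k).image Fin.castSucc := by
      intro t h1 h2 h3
      have hXcl : ∀ x ∈ X, σ x ∈ X := by
        intro x hx
        have hcl := (image_perm_eq_iff' σ (t i)).mp (h2 i)
        rw [h3] at hcl
        exact hcl x hx
      have hcardX : (X.card : ℤ) = α i - 1 := by
        have hc := h1.2 i
        rw [h3, Finsupp.sub_apply, Finsupp.single_eq_same] at hc
        linarith
      have hdisjTl : ∀ l, l ≠ i →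
          Disjoint (insert (Fin.last N) (X.image Fin.castSucc)) ((t l).image Fin.castSucc) := by
        intro l hl
        rw [Finset.disjoint_left]
        intro z hz hz'
        obtain ⟨x, hx, rfl⟩ := Finset.mem_image.mp hz'
        rcases Finset.mem_insert.mp hz with h | h
        · exact hlastne x h
        · obtain ⟨y, hy, hyx⟩ := Finset.mem_image.mp h
          obtain rfl : y = x := Fin.castSucc_injective N hyx
          exact Finset.disjoint_left.mp (h1.1 i l fun hh => hl hh.symm)
            (by rw [h3]; exact hy) hx
      refine ⟨⟨?_, ?_⟩, ?_⟩
      · intro k l hkl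
        beta_reduce
        by_cases hk : k = i
        · subst hk
          rw [if_pos rfl, if_neg (fun h : l = k => hkl h.symm)]
          exact hdisjTl l (fun h => hkl h.symm)
        · by_cases hl : l = i
          · subst hl
            rw [if_neg hk, if_pos rfl]
            exact (hdisjTl k hk).symm
          · rw [if_neg hk, if_neg hl, Finset.disjoint_left]
            intro z hz hz'
            obtain ⟨x, hx, rfl⟩ := Finset.mem_image.mp hz
            obtain ⟨y, hy, hyx⟩ := Finset.mem_image.mp hz'
            obtain rfl : y = x := Fin.castSucc_injective N hyx
            exact Finset.disjoint_left.mp (h1.1 k l hkl) hx hy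
      · intro k
        beta_reduce
        by_cases hk : k = i
        · subst hk
          rw [if_pos rfl, Finset.card_insert_of_notMem (by
              intro hmem
              obtain ⟨x, _, hx⟩ := Finset.mem_image.mp hmem
              exact hlastne x hx),
            Finset.card_image_of_injective _ (Fin.castSucc_injective N)]
          push_cast
          linarith
        · rw [if_neg hk, Finset.card_image_of_injective _ (Fin.castSucc_injective N)]
          have hc := h1.2 k
          rw [Finsupp.sub_apply, Finsupp.single_apply, if_neg (fun h => hk h.symm)] at hc
          linarith
      · intro k
        rw [image_perm_eq_iff']
        intro z hz
        by_cases hk : k = i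
        · subst hk
          rw [if_pos rfl] at hz ⊢
          rcases Finset.mem_insert.mp hz with rfl | hz'
          · rw [hClast]
            rcases hpX with rfl | ⟨q, hq, rfl⟩
            · rw [htlast]; exact Finset.mem_insert_self _ _
            · rw [htilde]
              exact Finset.mem_insert_of_mem (Finset.mem_image_of_mem _ (hXcl q hq))
          · obtain ⟨x, hx, rfl⟩ := Finset.mem_image.mp hz'
            by_cases hxp : Fin.castSucc x = p
            · rw [hxp, hB]; exact Finset.mem_insert_self _ _
            · rw [hA x hxp]
              exact Finset.mem_insert_of_mem (Finset.mem_image_of_mem _ (hXcl x hx))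
        · rw [if_neg hk] at hz ⊢
          obtain ⟨x, hx, rfl⟩ := Finset.mem_image.mp hz
          have hxp : Fin.castSucc x ≠ p := by
            rcases hpX with rfl | ⟨q, hq, rfl⟩
            · exact hlastne x
            · intro h
              obtain rfl : x = q := Fin.castSucc_injective N h
              exact Finset.disjoint_left.mp (h1.1 k i hk) hx (by rw [h3]; exact hq)
          rw [hA x hxp]
          exact Finset.mem_image_of_mem _ ((image_perm_eq_iff' σ (t k)).mp (h2 k) x hx)
    refine Nat.card_congr
      ⟨fun t => ⟨fun k => Finset.univ.filter fun x => Fin.castSucc x ∈ t.1 k,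
          (hdown t.1 t.2.1 t.2.2.1 t.2.2.2).1, (hdown t.1 t.2.1 t.2.2.1 t.2.2.2).2.1,
          (hdown t.1 t.2.1 t.2.2.1 t.2.2.2).2.2⟩,
        fun t => ⟨fun k => if k = i then insert (Fin.last N) (X.image Fin.castSucc)
            else (t.1 k).image Fin.castSucc,
          (hup t.1 t.2.1 t.2.2.1 t.2.2.2).1, (hup t.1 t.2.1 t.2.2.1 t.2.2.2).2, if_pos rfl⟩,
        ?_, ?_⟩
    · rintro ⟨t, h1, h2, h3⟩
      apply Subtype.ext
      funext k
      dsimp only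
      by_cases hk : k = i
      · subst hk
        rw [if_pos rfl, ← h3]
      · rw [if_neg hk]
        exact hud t h1.1 h3 k hk
    · rintro ⟨t, h1, h2, h3⟩
      apply Subtype.ext
      funext k
      dsimp only
      by_cases hk : k = i
      · subst hk
        ext x
        simp only [Finset.mem_filter, Finset.mem_univ, true_and]
        rw [if_true, hcastX, h3]
      · ext x
        simp only [Finset.mem_filter, Finset.mem_univ, true_and]
        rw [if_neg hk]
        simp only [Finset.mem_image]
        constructor
        · rintro ⟨y, hy, hyx⟩
          exact (Fin.castSucc_injective N hyx) ▸ hy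
        · intro h; exact ⟨x, h, rfl⟩
  · rw [if_neg hXj]
    obtain ⟨q, hq, hpq⟩ : ∃ q, q ∈ S j ∧ p = Fin.castSucc q := by
      rcases hp with ⟨q, hq, rfl⟩ | ⟨hS, _⟩
      · exact ⟨q, hq, rfl⟩
      · exact absurd (by rw [hS]; exact Finset.empty_subset X) hXj
    have hj : j ∈ β.support := by
      rw [Finsupp.mem_support_iff, ← hcard j]
      intro h0
      rw [Finset.card_eq_zero] at h0
      rw [h0] at hq
      exact absurd hq (Finset.notMem_empty q)
    have hσg : ∀ y ∈ S j, σ y = f j y := by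
      intro y hy
      have hfy : f j y ∈ S j := (hcyc j).1.mapsTo hy
      have hdecomp := Finset.noncommProd_erase_mul β.support hj f hcomm
      have hmem : ∀ (comm : ((β.support.erase j : Finset ℕ) : Set ℕ).Pairwise
            fun a b => Commute (f a) (f b)),
          (β.support.erase j).noncommProd f comm (f j y) = f j y := by
        intro comm
        have hst := Subgroup.noncommProd_mem (MulAction.stabilizer (Equiv.Perm (Fin N)) (f j y))
          comm ?_
        · rwa [MulAction.mem_stabilizer_iff, Equiv.Perm.smul_def] at hst
        · intro k hk
          rw [MulAction.mem_stabilizer_iff, Equiv.Perm.smul_def]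
          have hkj : k ≠ j := Finset.ne_of_mem_erase hk
          exact hfix k _ (Finset.disjoint_left.mp (hdisj j k fun h => hkj h.symm) hfy)
      rw [hσ, ← hdecomp, Equiv.Perm.mul_apply]
      exact hmem _
    have hempty : IsEmpty {t : ℕ → Finset (Fin (N + 1)) //
        IsTabloid (N + 1) α t ∧ (∀ k, (t k).image E = t k) ∧
        t i = insert (Fin.last N) (X.image Fin.castSucc)} := by
      constructor
      rintro ⟨t, ⟨hdisjt, _⟩, h2, h3⟩
      have hlastmem : Fin.last N ∈ t i := by rw [h3]; exact Finset.mem_insert_self _ _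
      have hinv : ∀ z ∈ t i, E⁻¹ z ∈ t i := fun z hz => inv_mem_of_image_perm_eq (h2 i) hz
      have hpmem : p ∈ t i := by
        have hm := hinv _ hlastmem
        rwa [← hB, (Equiv.Perm.inv_eq_iff_eq.mpr rfl : E⁻¹ (E p) = p)] at hm
      have hSmaps : ∀ y ∈ S j, (f j)⁻¹ y ∈ S j := by
        intro y hy
        obtain ⟨z, hz, hzy⟩ := (hcyc j).1.surjOn hy
        have hz' : (f j)⁻¹ y = z := by rw [← hzy, (Equiv.Perm.inv_eq_iff_eq.mpr rfl : (f j)⁻¹ (f j z) = z)]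
        rw [hz']
        exact hz
      have claim : ∀ m : ℕ, ((f j)⁻¹ ^ m) q ∈ S j ∧ Fin.castSucc (((f j)⁻¹ ^ m) q) ∈ t i := by
        intro m
        induction m with
        | zero => exact ⟨by simpa using hq, by simpa using (hpq ▸ hpmem)⟩
        | succ m ih =>
          obtain ⟨hyS, hyt⟩ := ih
          have hstep : ((f j)⁻¹ ^ (m + 1)) q = (f j)⁻¹ (((f j)⁻¹ ^ m) q) := by
            rw [pow_succ', Equiv.Perm.mul_apply]
          by_cases hcase : (f j)⁻¹ (((f j)⁻¹ ^ m) q) = q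
          · rw [hstep, hcase]
            exact ⟨hq, hpq ▸ hpmem⟩
          · have hS' := hSmaps _ hyS
            have hEeq : E (Fin.castSucc ((f j)⁻¹ (((f j)⁻¹ ^ m) q)))
                = Fin.castSucc (((f j)⁻¹ ^ m) q) := by
              rw [hA]
              · rw [hσg _ hS', ((Equiv.eq_symm_apply (f j)).mp rfl : f j ((f j)⁻¹ (((f j)⁻¹ ^ m) q)) = ((f j)⁻¹ ^ m) q)]
              · rw [hpq]
                intro h
                exact hcase (Fin.castSucc_injective N h)
            have hm := hinv _ hyt
            rw [← hEeq, (Equiv.Perm.inv_eq_iff_eq.mpr rfl : E⁻¹ (E (Fin.castSucc ((f j)⁻¹ (((f j)⁻¹ ^ m) q)))) = Fin.castSucc ((f j)⁻¹ (((f j)⁻¹ ^ m) q)))] at hm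
            exact ⟨hstep ▸ hS', hstep ▸ hm⟩
      obtain ⟨y, hyS, hyX⟩ := Finset.not_subset.mp hXj
      have hsc : Equiv.Perm.SameCycle (f j)⁻¹ q y :=
        ((hcyc j).2 (Finset.mem_coe.mpr hq) (Finset.mem_coe.mpr hyS)).inv
      obtain ⟨m, _, hm⟩ := hsc.exists_pow_eq'
      have hmm := (claim m).2
      rw [hm, h3] at hmm
      rcases Finset.mem_insert.mp hmm with h | h
      · exact hlastne y h
      · obtain ⟨z, hz, hzy⟩ := Finset.mem_image.mp h
        obtain rfl : z = y := Fin.castSucc_injective N hzy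
        exact hyX hz
    exact Nat.card_of_isEmpty
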